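/- arXiv:1604.06697 — 3 statements merged into one kernel-verified Lean document; each statement's English description precedes it below -/
import Mathlib

section
/- For a random permutation of n distinct elements, the probability that the median of the first, middle, and last elements equals the (k+1)-st smallest element is 6·k·(n−1−k)/(n·(n−1)·(n−2)) for 0 ≤ k ≤ n−1 and n ≥ 3. -/
open Finset in
/-- Median-of-three pivot selection: the ranks of the three sampled elements
form a uniformly random 3-subset of `{0, …, n-1}`.  The probability that the
median of the sample has rank `k` (i.e. is the `(k+1)`-st smallest element) is
`6·k·(n-1-k) / (n·(n-1)·(n-2))`. -/
theorem median_of_three_rank_probability (n k : ℕ) (hn : 3 ≤ n) (hk : k ≤ n - 1) :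
    ((((range n).powersetCard 3).filter
        (fun S => k ∈ S ∧ (S.filter (fun x => x < k)).card = 1)).card : ℝ)
      / (n.choose 3 : ℝ)
    = 6 * k * ((n : ℝ) - 1 - k) / ((n : ℝ) * ((n : ℝ) - 1) * ((n : ℝ) - 2)) := by
  have hset : (((range n).powersetCard 3).filter
        (fun S => k ∈ S ∧ (S.filter (fun x => x < k)).card = 1))
      = ((range k) ×ˢ (Ico (k+1) n)).image (fun p : ℕ × ℕ => {p.1, k, p.2}) := by
    ext S
    simp only [mem_filter, mem_powersetCard, mem_image, mem_product, mem_range, mem_Ico,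
      Prod.exists]
    constructor
    · rintro ⟨⟨hsub, hcard⟩, hkS, hone⟩
      obtain ⟨a, ha⟩ := Finset.card_eq_one.mp hone
      have haS : a ∈ S ∧ a < k :=
        Finset.mem_filter.mp (ha ▸ Finset.mem_singleton_self a)
      have hrest : (S.filter (fun x => ¬ x < k)).card = 2 := by
        have := Finset.card_filter_add_card_filter_not
          (s := S) (p := fun x => x < k)
        omega
      obtain ⟨x, y, hxy, hxyset⟩ := Finset.card_eq_two.mp hrest
      have hkmem : k ∈ S.filter (fun x => ¬ x < k) := by simp [hkS]
      rw [hxyset] at hkmem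
      simp only [mem_insert, mem_singleton] at hkmem
      obtain ⟨b, hb1, hb2⟩ : ∃ b, S.filter (fun x => ¬ x < k) = {k, b} ∧ b ≠ k := by
        rcases hkmem with h | h
        · subst h
          exact ⟨y, hxyset, fun hyk => hxy hyk.symm⟩
        · subst h
          exact ⟨x, by rw [hxyset, Finset.pair_comm], hxy⟩
      have hbmem : b ∈ S.filter (fun x => ¬ x < k) := by rw [hb1]; simp
      rw [Finset.mem_filter] at hbmem
      have hbk : k + 1 ≤ b := by
        rcases Nat.lt_or_ge b k with h | h
        · exact absurd h hbmem.2
        · omega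
      have hbn : b < n := Finset.mem_range.mp (hsub hbmem.1)
      refine ⟨a, b, ⟨haS.2, hbk, hbn⟩, ?_⟩
      have hS : S = S.filter (fun x => x < k) ∪ S.filter (fun x => ¬ x < k) :=
        (Finset.filter_union_filter_not_eq _ S).symm
      rw [hS, ha, hb1]
      exact (Finset.insert_eq a {k, b}).symm ▸ rfl
    · rintro ⟨a, b, ⟨hak, hkb, hbn⟩, rfl⟩
      have hne1 : a ≠ k := by omega
      have hne2 : a ≠ b := by omega
      have hne3 : k ≠ b := by omega
      refine ⟨⟨?_, ?_⟩, ?_, ?_⟩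
      · intro z hz
        simp only [mem_insert, mem_singleton] at hz
        simp only [mem_range]
        rcases hz with rfl | rfl | rfl <;> omega
      · rw [Finset.card_insert_of_notMem (by simp [hne1, hne2]),
          Finset.card_insert_of_notMem (by simp [hne3])]
        simp
      · simp
      · have hfa : ({a, k, b} : Finset ℕ).filter (fun x => x < k) = {a} := by
          ext z
          simp only [mem_filter, mem_insert, mem_singleton]
          constructor
          · rintro ⟨rfl | rfl | rfl, h⟩ <;> omega
          · rintro rfl; exact ⟨Or.inl rfl, hak⟩
        rw [hfa]; simp
  have hinj : Set.InjOn (fun p : ℕ × ℕ => ({p.1, k, p.2} : Finset ℕ))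
      (((range k) ×ˢ (Ico (k+1) n) : Finset (ℕ × ℕ)) : Set (ℕ × ℕ)) := by
    rintro ⟨a, b⟩ hab ⟨c, d⟩ hcd h
    simp only [Finset.mem_coe, Finset.mem_product, mem_range, mem_Ico] at hab hcd
    simp only at h
    have ha : a ∈ ({c, k, d} : Finset ℕ) := h ▸ (by simp)
    have hb : b ∈ ({c, k, d} : Finset ℕ) := h ▸ (by simp)
    simp only [mem_insert, mem_singleton] at ha hb
    have : a = c := by omega
    have : b = d := by omega
    simp_all
  have hcard : (((range n).powersetCard 3).filter
        (fun S => k ∈ S ∧ (S.filter (fun x => x < k)).card = 1)).card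
      = k * (n - 1 - k) := by
    rw [hset, Finset.card_image_of_injOn hinj, Finset.card_product, Finset.card_range,
      Nat.card_Ico]
    congr 1
    omega
  have hchoose : (n.choose 3) * 6 = n * (n - 1) * (n - 2) := by
    have h6 : Nat.factorial 3 = 6 := rfl
    rw [Nat.choose_eq_descFactorial_div_factorial, ← h6,
      Nat.div_mul_cancel (Nat.factorial_dvd_descFactorial n 3)]
    simp [Nat.descFactorial]
    ring
  rw [hcard]
  have h1 : ((n - 1 - k : ℕ) : ℝ) = (n : ℝ) - 1 - k := by
    push_cast [Nat.cast_sub (by omega : k ≤ n - 1), Nat.cast_sub (by omega : 1 ≤ n)]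
    ring
  have h2 : ((n.choose 3 : ℕ) : ℝ) * 6 = (n : ℝ) * ((n : ℝ) - 1) * ((n : ℝ) - 2) := by
    have hc := congrArg (Nat.cast (R := ℝ)) hchoose
    push_cast [Nat.cast_sub (by omega : 1 ≤ n), Nat.cast_sub (by omega : 2 ≤ n)] at hc
    linarith
  have h3 : (3 : ℝ) ≤ (n : ℝ) := by exact_mod_cast hn
  have hpos : (0 : ℝ) < (n : ℝ) * ((n : ℝ) - 1) * ((n : ℝ) - 2) :=
    mul_pos (mul_pos (by linarith) (by linarith)) (by linarith)
  have hc0 : ((n.choose 3 : ℕ) : ℝ) ≠ 0 := by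
    intro h
    rw [h] at h2
    linarith
  push_cast [h1]
  rw [div_eq_div_iff hc0 (ne_of_gt hpos), ← h2]
  ring
end

section
/- If every comparison of a sorting algorithm is followed by a conditional branch depending on the comparison's outcome and the algorithm performs at most d·n·log₂ n comparisons, then under any fixed branch prediction the expected number of branch mispredictions on a uniformly random permutation is Ω(n·log_d n) (Brodal–Moruz trade-off, special case d ≥ 2 constant: Ω(n log n) mispredictions for O(n log n) comparisons). -/
open Real Finset

lemma BM_pow_div_le_factorial (m : ℕ) : ((m:ℝ)/3)^m ≤ (m.factorial : ℝ) := by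
  induction m with
  | zero => simp
  | succ m ih =>
    rcases Nat.eq_zero_or_pos m with h|h
    · subst h; norm_num [Nat.factorial]
    · have hm : (0:ℝ) < m := by exact_mod_cast h
      have e2 : (((m:ℝ)+1)/m)^m ≤ 3 := by
        calc (((m:ℝ)+1)/m)^m ≤ (Real.exp (1/m))^m := by
              apply pow_le_pow_left₀ (by positivity)
              rw [show ((m:ℝ)+1)/m = 1/m + 1 by field_simp; ring]
              exact Real.add_one_le_exp _
          _ = Real.exp 1 := by
              rw [← Real.exp_nat_mul]
              rw [mul_one_div, div_self hm.ne']
          _ ≤ 3 := by have := Real.exp_one_lt_d9; linarith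
      have key : ((m:ℝ)+1)/3 = ((m:ℝ)+1)/m * ((m:ℝ)/3) := by field_simp
      have hfs : (0:ℝ) ≤ (m.factorial : ℝ) := by positivity
      calc ((↑(m+1):ℝ)/3)^(m+1)
          = (((m:ℝ)+1)/m)^m * (((m:ℝ)/3)^m * (((m:ℝ)+1)/3)) := by
            push_cast
            rw [pow_succ, key, mul_pow]
            ring
        _ ≤ 3 * ((m.factorial:ℝ) * (((m:ℝ)+1)/3)) := by
            apply mul_le_mul e2 ?_ (by positivity) (by norm_num)
            apply mul_le_mul_of_nonneg_right ih (by positivity)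
        _ = ((m:ℝ)+1) * (m.factorial:ℝ) := by ring
        _ = ((m+1).factorial : ℝ) := by
            rw [Nat.factorial_succ]; push_cast; ring

lemma BM_choose_shift (j a b : ℕ) : a.choose b ≤ (a+j).choose (b+j) := by
  induction j with
  | zero => simp
  | succ j ih =>
    calc a.choose b ≤ (a+j).choose (b+j) := ih
      _ ≤ (a+(j+1)).choose (b+(j+1)) := by
          rw [show a+(j+1) = (a+j)+1 by ring, show b+(j+1) = (b+j)+1 by ring,
            Nat.choose_succ_succ]
          exact Nat.le_add_right _ _

lemma BM_sum_choose (D m : ℕ) :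
    ∑ i ∈ Finset.range (m+1), (D.choose i : ℝ)
      ≤ ((m:ℝ)+1) * ((D:ℝ)+m)^m / (m.factorial : ℝ) := by
  have h1 : ∑ i ∈ Finset.range (m+1), (D.choose i : ℝ) ≤ ((m:ℝ)+1) * ((D+m).choose m : ℝ) := by
    calc ∑ i ∈ Finset.range (m+1), (D.choose i : ℝ)
        ≤ ∑ _i ∈ Finset.range (m+1), ((D+m).choose m : ℝ) := by
          apply Finset.sum_le_sum
          intro i hi
          have hi' : i ≤ m := Nat.lt_succ_iff.mp (Finset.mem_range.mp hi)
          have h2 := BM_choose_shift (m-i) D i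
          rw [Nat.add_sub_cancel' hi'] at h2
          exact_mod_cast h2.trans (Nat.choose_le_choose m (by omega))
      _ = ((m:ℝ)+1) * ((D+m).choose m : ℝ) := by
          rw [Finset.sum_const, Finset.card_range, nsmul_eq_mul]; push_cast; ring
  refine h1.trans ?_
  rw [mul_div_assoc]
  have h3 := Nat.choose_le_pow_div (α := ℝ) m (D+m)
  apply mul_le_mul_of_nonneg_left (h3.trans_eq ?_) (by positivity)
  push_cast
  ring

lemma BM_logb_le (y : ℝ) (hy : 1 ≤ y) : Real.logb 2 y ≤ 2*y := by
  rw [Real.logb, div_le_iff₀ (Real.log_pos one_lt_two)]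
  have h1 : Real.log y ≤ y - 1 := Real.log_le_sub_one_of_pos (by linarith)
  have h2 : (0.6931471803:ℝ) < Real.log 2 := Real.log_two_gt_d9
  nlinarith

set_option maxHeartbeats 2000000 in
open Finset in
/-- Brodal–Moruz trade-off: consider a comparison-based sorting algorithm
given as a decision tree with `n!` leaves and depth `D ≤ d·n·log₂ n` (so it
performs at most `d·n·log₂ n` comparisons), where every comparison is followed
by a predicted conditional branch.  If `miss ℓ` denotes the number of
mispredicted branches on the path to leaf `ℓ`, and (as holds for any decision
tree) at most `∑_{i ≤ m} C(D, i)` leaves have `miss ≤ m`, then the average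
number of branch mispredictions over a uniformly random permutation is
`Ω(n·log n / log d) = Ω(n·log_d n)`. -/
theorem brodal_moruz_lower_bound :
    ∃ c : ℝ, 0 < c ∧ ∃ n₀ : ℕ, ∀ d : ℝ, 2 ≤ d → ∀ n : ℕ, n₀ ≤ n →
      ∀ D : ℕ, (D : ℝ) ≤ d * n * Real.logb 2 n →
      ∀ miss : Fin (n.factorial) → ℕ,
        (∀ m : ℕ, ((univ.filter (fun ℓ => miss ℓ ≤ m)).card : ℝ)
            ≤ ∑ i ∈ range (m + 1), (D.choose i : ℝ)) →
        c * ((n : ℝ) * Real.logb 2 n / Real.logb 2 d)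
          ≤ (∑ ℓ, (miss ℓ : ℝ)) / (n.factorial : ℝ) := by
  refine ⟨1/256, by norm_num, 64, ?_⟩
  intro d hd n hn D hD miss hmiss
  set L := Real.logb 2 (n:ℝ) with hLdef
  set q := Real.logb 2 d with hqdef
  have hn64 : (64:ℝ) ≤ n := by exact_mod_cast hn
  have hn0 : (0:ℝ) < n := by linarith
  have hq1 : (1:ℝ) ≤ q := by
    rw [hqdef]
    calc (1:ℝ) = Real.logb 2 2 := (Real.logb_self_eq_one one_lt_two).symm
      _ ≤ Real.logb 2 d := Real.logb_le_logb_of_le one_lt_two two_pos hd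
  have hq0 : (0:ℝ) < q := by linarith
  have hL6 : (6:ℝ) ≤ L := by
    rw [hLdef]
    calc (6:ℝ) = Real.logb 2 ((2:ℝ)^(6:ℕ)) := by
          rw [Real.logb_pow, Real.logb_self_eq_one one_lt_two]; norm_num
      _ ≤ Real.logb 2 (n:ℝ) :=
          Real.logb_le_logb_of_le one_lt_two (by positivity) (by norm_num; linarith)
  have hL0 : (0:ℝ) < L := by linarith
  have hnL : (0:ℝ) < (n:ℝ)*L := by positivity
  have hfac0 : (0:ℝ) < (n.factorial:ℝ) := by exact_mod_cast n.factorial_pos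
  clear_value L q
  have count : ∀ m : ℕ, ((n.factorial:ℝ) - ∑ i ∈ range (m+1), (D.choose i:ℝ)) * ((m:ℝ)+1)
      ≤ ∑ ℓ, (miss ℓ:ℝ) := by
    intro m
    have hsplit : (univ.filter (fun ℓ => miss ℓ ≤ m)).card
        + (univ.filter (fun ℓ => ¬ miss ℓ ≤ m)).card = n.factorial := by
      rw [Finset.card_filter_add_card_filter_not, Finset.card_univ, Fintype.card_fin]
    have hsum : ((univ.filter (fun ℓ => ¬ miss ℓ ≤ m)).card : ℝ) * ((m:ℝ)+1)
        ≤ ∑ ℓ, (miss ℓ:ℝ) := by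
      calc ((univ.filter (fun ℓ => ¬ miss ℓ ≤ m)).card : ℝ) * ((m:ℝ)+1)
          = ∑ _ℓ ∈ univ.filter (fun ℓ => ¬ miss ℓ ≤ m), ((m:ℝ)+1) := by
            rw [Finset.sum_const, nsmul_eq_mul]
        _ ≤ ∑ ℓ ∈ univ.filter (fun ℓ => ¬ miss ℓ ≤ m), (miss ℓ:ℝ) := by
            apply Finset.sum_le_sum
            intro ℓ hℓ
            have h2 := (Finset.mem_filter.mp hℓ).2
            have h3 : m + 1 ≤ miss ℓ := by omega
            have h4 : ((m+1:ℕ):ℝ) ≤ ((miss ℓ:ℕ):ℝ) := by exact_mod_cast h3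
            push_cast at h4
            linarith
        _ ≤ ∑ ℓ, (miss ℓ:ℝ) :=
            Finset.sum_le_sum_of_subset_of_nonneg (Finset.filter_subset _ _)
              (fun _ _ _ => by positivity)
    have hF := hmiss m
    have hcast : ((univ.filter (fun ℓ => ¬ miss ℓ ≤ m)).card : ℝ)
        = (n.factorial:ℝ) - ((univ.filter (fun ℓ => miss ℓ ≤ m)).card : ℝ) := by
      have h := congrArg (Nat.cast : ℕ → ℝ) hsplit
      push_cast at h
      linarith
    calc ((n.factorial:ℝ) - ∑ i ∈ range (m+1), (D.choose i:ℝ)) * ((m:ℝ)+1)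
        ≤ ((univ.filter (fun ℓ => ¬ miss ℓ ≤ m)).card : ℝ) * ((m:ℝ)+1) := by
          apply mul_le_mul_of_nonneg_right _ (by positivity)
          rw [hcast]; linarith
      _ ≤ _ := hsum
  set x : ℝ := (n:ℝ)*L/(64*q) with hxdef
  have htarget : 1/256 * ((n:ℝ)*L/q) = x/4 := by
    rw [hxdef]; field_simp; ring
  rw [htarget]
  rw [le_div_iff₀ hfac0]
  by_cases hx1 : x < 1
  · -- small x case
    have h0 := count 0
    norm_num at h0
    have hfac64 : (64:ℝ) ≤ (n.factorial:ℝ) := by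
      have h5 := Nat.self_le_factorial n
      have h6 : (n:ℝ) ≤ (n.factorial:ℝ) := by exact_mod_cast h5
      linarith
    have hh : x/4*(n.factorial:ℝ) ≤ (n.factorial:ℝ)/4 := by
      nlinarith [mul_nonneg (by linarith : (0:ℝ) ≤ 1 - x) hfac0.le]
    linarith
  · push_neg at hx1
    set m := ⌊x⌋₊ with hmdef
    have hx0 : (0:ℝ) ≤ x := by linarith
    have hm1 : 1 ≤ m := Nat.le_floor (by exact_mod_cast hx1)
    have hm1R : (1:ℝ) ≤ (m:ℝ) := by exact_mod_cast hm1
    have hm0 : (0:ℝ) < (m:ℝ) := by linarith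
    have hmle : (m:ℝ) ≤ x := Nat.floor_le hx0
    have hmge : x/2 ≤ (m:ℝ) := by
      rcases le_total x 2 with h|h
      · linarith
      · have h7 := Nat.sub_one_lt_floor x
        rw [← hmdef] at h7
        linarith
    clear_value m
    clear_value x
    set A : ℝ := (D:ℝ) + (m:ℝ) with hAdef
    clear_value A
    have hD0 : (0:ℝ) ≤ (D:ℝ) := Nat.cast_nonneg D
    have hA1 : (1:ℝ) ≤ A := by rw [hAdef]; linarith
    have hA0 : (0:ℝ) < A := by linarith
    have hfacm0 : (0:ℝ) < (m.factorial:ℝ) := by exact_mod_cast m.factorial_pos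
    have hxq : x*q = (n:ℝ)*L/64 := by rw [hxdef]; field_simp
    have hxle : x ≤ (n:ℝ)*L := by
      rw [hxdef, div_le_iff₀ (by positivity)]
      nlinarith [mul_le_mul_of_nonneg_left hq1 hnL.le, mul_nonneg hnL.le hq0.le]
    have hAle : A ≤ 2*(d*((n:ℝ)*L)) := by
      have h8 : (n:ℝ)*L ≤ d*((n:ℝ)*L) := by nlinarith [hnL.le]
      have h9 : (D:ℝ) ≤ d*((n:ℝ)*L) := by linarith [hD]
      rw [hAdef]; linarith
    have hmlow : (n:ℝ)*L ≤ 128*q*(m:ℝ) := by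
      have h : (n:ℝ)*L/(128*q) ≤ (m:ℝ) := by
        rw [show (n:ℝ)*L/(128*q) = x/2 by rw [hxdef]; ring]
        exact hmge
      rw [div_le_iff₀ (by positivity)] at h
      linarith
    have hB1 : 3*A/(m:ℝ) ≤ 768*(d*q) := by
      rw [div_le_iff₀ hm0]
      linarith [mul_le_mul_of_nonneg_left hmlow (show (0:ℝ) ≤ 6*d by linarith), hAle]
    have hlog1 : Real.logb 2 (3*A/(m:ℝ)) ≤ 13*q := by
      have hmono : Real.logb 2 (3*A/(m:ℝ)) ≤ Real.logb 2 (768*(d*q)) :=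
        Real.logb_le_logb_of_le one_lt_two (by positivity) hB1
      have hdq : Real.logb 2 (768*(d*q)) = Real.logb 2 768 + (q + Real.logb 2 q) := by
        rw [Real.logb_mul (by norm_num) (by positivity),
          Real.logb_mul (by positivity) (by positivity), ← hqdef]
      have h768 : Real.logb 2 (768:ℝ) ≤ 10 := by
        calc Real.logb 2 (768:ℝ) ≤ Real.logb 2 (1024:ℝ) :=
              Real.logb_le_logb_of_le one_lt_two (by norm_num) (by norm_num)
          _ = 10 := by
            rw [show (1024:ℝ) = 2^(10:ℕ) by norm_num, Real.logb_pow,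
              Real.logb_self_eq_one one_lt_two]
            norm_num
      have hlq : Real.logb 2 q ≤ 2*q := BM_logb_le q hq1
      rw [hdq] at hmono
      linarith
    have hlogm1 : Real.logb 2 ((m:ℝ)+1) ≤ (n:ℝ)*L/16 := by
      have h10 := BM_logb_le ((m:ℝ)+1) (by linarith)
      nlinarith [mul_nonneg hx0 (by linarith : (0:ℝ) ≤ q - 1)]
    have hlogm : (m:ℝ)*Real.logb 2 (3*A/(m:ℝ)) ≤ 13*((n:ℝ)*L)/64 := by
      have h11 : (m:ℝ)*Real.logb 2 (3*A/(m:ℝ)) ≤ (m:ℝ)*(13*q) :=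
        mul_le_mul_of_nonneg_left hlog1 hm0.le
      have h12 : (m:ℝ)*(13*q) ≤ x*(13*q) := mul_le_mul_of_nonneg_right hmle (by positivity)
      nlinarith [hxq]
    have hKey : ((m:ℝ)+1)*A^m/(m.factorial:ℝ) ≤ (n.factorial:ℝ)/2 := by
      have hLpos : (0:ℝ) < ((m:ℝ)+1)*A^m/(m.factorial:ℝ) := by positivity
      have hRpos : (0:ℝ) < (n.factorial:ℝ)/2 := by positivity
      rw [← Real.logb_le_logb one_lt_two hLpos hRpos]
      have e1 : Real.logb 2 (((m:ℝ)+1)*A^m/(m.factorial:ℝ))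
          = Real.logb 2 ((m:ℝ)+1) + (m:ℝ)*Real.logb 2 A - Real.logb 2 (m.factorial:ℝ) := by
        rw [Real.logb_div (by positivity) hfacm0.ne',
          Real.logb_mul (by positivity) (by positivity), Real.logb_pow]
      have e2 : Real.logb 2 ((n.factorial:ℝ)/2) = Real.logb 2 (n.factorial:ℝ) - 1 := by
        rw [Real.logb_div hfac0.ne' (by norm_num), Real.logb_self_eq_one one_lt_two]
      rw [e1, e2]
      have hfb : (m:ℝ)*Real.logb 2 ((m:ℝ)/3) ≤ Real.logb 2 (m.factorial:ℝ) := by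
        rw [← Real.logb_pow]
        exact Real.logb_le_logb_of_le one_lt_two (by positivity) (BM_pow_div_le_factorial m)
      have hcomb : (m:ℝ)*Real.logb 2 A - (m:ℝ)*Real.logb 2 ((m:ℝ)/3)
          = (m:ℝ)*Real.logb 2 (3*A/(m:ℝ)) := by
        rw [show (3:ℝ)*A/(m:ℝ) = A/((m:ℝ)/3) by field_simp,
          Real.logb_div hA0.ne' (by positivity), mul_sub]
      have hnf : (n:ℝ)*(L - 2) ≤ Real.logb 2 (n.factorial:ℝ) := by
        have hlb3 : Real.logb 2 (3:ℝ) ≤ 2 := by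
          calc Real.logb 2 (3:ℝ) ≤ Real.logb 2 (4:ℝ) :=
                Real.logb_le_logb_of_le one_lt_two (by norm_num) (by norm_num)
            _ = 2 := by
              rw [show (4:ℝ) = 2^(2:ℕ) by norm_num, Real.logb_pow,
                Real.logb_self_eq_one one_lt_two]
              norm_num
        have h13 : (n:ℝ)*Real.logb 2 ((n:ℝ)/3) ≤ Real.logb 2 (n.factorial:ℝ) := by
          rw [← Real.logb_pow]
          exact Real.logb_le_logb_of_le one_lt_two (by positivity) (BM_pow_div_le_factorial n)
        have h14 : Real.logb 2 ((n:ℝ)/3) = L - Real.logb 2 (3:ℝ) := by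
          rw [Real.logb_div hn0.ne' (by norm_num), ← hLdef]
        nlinarith [mul_le_mul_of_nonneg_left (by linarith : L - 2 ≤ L - Real.logb 2 (3:ℝ)) hn0.le]
      have hfin : 17*((n:ℝ)*L)/64 ≤ (n:ℝ)*(L-2) - 1 := by
        nlinarith [mul_le_mul_of_nonneg_left hL6 hn0.le]
      linarith
    have hK : (∑ i ∈ range (m+1), (D.choose i:ℝ)) ≤ (n.factorial:ℝ)/2 := by
      rw [hAdef] at hKey
      exact (BM_sum_choose D m).trans hKey
    have hcount := count m
    nlinarith [mul_le_mul_of_nonneg_right (by linarith : (n.factorial:ℝ)/2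
        ≤ (n.factorial:ℝ) - ∑ i ∈ range (m+1), (D.choose i:ℝ)) (by linarith : (0:ℝ) ≤ (m:ℝ)+1),
      mul_le_mul_of_nonneg_right (by linarith : x/2 ≤ (m:ℝ)+1) hfac0.le]
end

section
/- Hoare's partitioning procedure is correct: upon termination it returns an index p such that every element at position < p is ≤ pivot and every element at position ≥ p is ≥ pivot, and the resulting array is a permutation of the input. -/
variable {α : Type*} [LinearOrder α] [Inhabited α]

section ListHelpers
variable {β : Type*}

lemma myPerm_set_cons (l : List β) : ∀ (i : ℕ) (a : β), i < l.length →
    (l.set i a).Perm (a :: l.eraseIdx i) := by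
  induction l with
  | nil => intro i a h; simp at h
  | cons x t ih =>
    intro i a h
    cases i with
    | zero => simp
    | succ i =>
      simp only [List.set_cons_succ, List.eraseIdx_cons_succ]
      exact ((ih i a (by simpa using h)).cons x).trans (List.Perm.swap a x _)

lemma mySet_getElem_self (l : List β) : ∀ (i : ℕ) (h : i < l.length), l.set i l[i] = l := by
  induction l with
  | nil => intro i h; simp at h
  | cons x t ih =>
    intro i h
    cases i with
    | zero => simp
    | succ i => simp [ih i (by simpa using h)]

lemma myPerm_cons_eraseIdx (l : List β) (i : ℕ) (h : i < l.length) :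
    l.Perm (l[i] :: l.eraseIdx i) := by
  have := myPerm_set_cons l i l[i] h
  rwa [mySet_getElem_self l i h] at this

lemma mySet_set_perm (l : List β) : ∀ (i j : ℕ) (hi : i < l.length) (hj : j < l.length),
    ((l.set i l[j]).set j l[i]).Perm l := by
  induction l with
  | nil => intro i j hi; simp at hi
  | cons x t ih =>
    intro i j hi hj
    cases i with
    | zero =>
      cases j with
      | zero => simp
      | succ j =>
        have hj' : j < t.length := by simpa using hj
        simp only [List.getElem_cons_succ, List.getElem_cons_zero, List.set_cons_zero,
          List.set_cons_succ]
        refine (((myPerm_set_cons t j x hj').cons _).trans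
          (List.Perm.swap x t[j] _)).trans ?_
        exact ((myPerm_cons_eraseIdx t j hj').symm.cons x)
    | succ i =>
      have hi' : i < t.length := by simpa using hi
      cases j with
      | zero =>
        simp only [List.getElem_cons_succ, List.getElem_cons_zero, List.set_cons_zero,
          List.set_cons_succ]
        refine (((myPerm_set_cons t i x hi').cons _).trans
          (List.Perm.swap x t[i] _)).trans ?_
        exact ((myPerm_cons_eraseIdx t i hi').symm.cons x)
      | succ j =>
        have hj' : j < t.length := by simpa using hj
        simp only [List.getElem_cons_succ, List.set_cons_succ]
        exact (ih i j hi' hj').cons x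
end ListHelpers

lemma mySwap_perm {β : Type*} (a : Array β) (i j : Fin a.size) :
    (a.swap i j).toList.Perm a.toList := by
  have hi : (i : ℕ) < a.toList.length := by simpa using i.isLt
  have hj : (j : ℕ) < a.toList.length := by simpa using j.isLt
  rw [Array.toList_swap]
  have e1 : a[(j : ℕ)] = a.toList[(j : ℕ)] := (Array.getElem_toList j.isLt).symm
  have e2 : a[(i : ℕ)] = a.toList[(i : ℕ)] := (Array.getElem_toList i.isLt).symm
  rw [e1, e2]
  exact mySet_set_perm a.toList i j hi hj

/-- Advance the left pointer while `A[ℓ] < pivot` (fuel-bounded). -/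
def hoareFindL (A : Array α) (pivot : α) : ℕ → ℕ → ℕ
  | 0, l => l
  | fuel + 1, l =>
      if l < A.size ∧ A[l]! < pivot then hoareFindL A pivot fuel (l + 1) else l

/-- Retreat the right pointer while `A[r] > pivot` (fuel-bounded). -/
def hoareFindR (A : Array α) (pivot : α) : ℕ → ℕ → ℕ
  | 0, r => r
  | fuel + 1, r =>
      if pivot < A[r]! then hoareFindR A pivot fuel (r - 1) else r

/-- Main loop of Hoare's partitioning: while `ℓ < r`, advance `ℓ` while
`A[ℓ] < pivot`, retreat `r` while `A[r] > pivot`, and if still `ℓ < r`, swap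
`A[ℓ]` and `A[r]` and advance both pointers; return `ℓ`. -/
def hoareLoop (pivot : α) : ℕ → Array α → ℕ → ℕ → Array α × ℕ
  | 0, A, l, _ => (A, l)
  | fuel + 1, A, l, r =>
      let l' := hoareFindL A pivot A.size l
      let r' := hoareFindR A pivot A.size r
      if l' < r' then hoareLoop pivot fuel (A.swapIfInBounds l' r') (l' + 1) (r' - 1)
      else (A, l')

/-- Hoare's partitioning procedure. -/
def hoarePartition (A : Array α) (pivot : α) : Array α × ℕ :=
  hoareLoop pivot A.size A 0 (A.size - 1)

lemma hoareFindL_spec (A : Array α) (pivot : α) :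
    ∀ (fuel l : ℕ), l ≤ A.size → A.size ≤ fuel + l →
      l ≤ hoareFindL A pivot fuel l ∧ hoareFindL A pivot fuel l ≤ A.size ∧
      (∀ j, l ≤ j → j < hoareFindL A pivot fuel l → A[j]! < pivot) ∧
      (hoareFindL A pivot fuel l < A.size → pivot ≤ A[hoareFindL A pivot fuel l]!) := by
  intro fuel
  induction fuel with
  | zero =>
    intro l hl hf
    simp only [hoareFindL]
    exact ⟨le_refl l, hl, fun j h1 h2 => absurd (lt_of_le_of_lt h1 h2) (lt_irrefl _),
      fun h => absurd h (by omega)⟩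
  | succ fuel ih =>
    intro l hl hf
    rw [hoareFindL]
    by_cases h : l < A.size ∧ A[l]! < pivot
    · rw [if_pos h]
      obtain ⟨h1, h2, h3, h4⟩ := ih (l + 1) h.1 (by omega)
      refine ⟨by omega, h2, ?_, h4⟩
      intro j hj hj2
      rcases eq_or_lt_of_le hj with rfl | hj'
      · exact h.2
      · exact h3 j (by omega) hj2
    · rw [if_neg h]
      refine ⟨le_refl l, hl, fun j h1 h2 => absurd (lt_of_le_of_lt h1 h2) (lt_irrefl _), ?_⟩
      intro hlt
      rcases not_and_or.mp h with h' | h'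
      · exact absurd hlt h'
      · exact not_lt.mp h'

lemma hoareFindR_spec (A : Array α) (pivot : α) :
    ∀ (fuel r i : ℕ), i ≤ r → A[i]! ≤ pivot → r ≤ fuel + i →
      i ≤ hoareFindR A pivot fuel r ∧ hoareFindR A pivot fuel r ≤ r ∧
      (∀ j, hoareFindR A pivot fuel r < j → j ≤ r → pivot < A[j]!) ∧
      A[hoareFindR A pivot fuel r]! ≤ pivot := by
  intro fuel
  induction fuel with
  | zero =>
    intro r i hir hiv hf
    have : r = i := le_antisymm (by omega) hir
    subst this
    simp only [hoareFindR]
    exact ⟨le_refl r, le_refl r, fun j h1 h2 => absurd (lt_of_lt_of_le h1 h2) (lt_irrefl _), hiv⟩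
  | succ fuel ih =>
    intro r i hir hiv hf
    rw [hoareFindR]
    by_cases h : pivot < A[r]!
    · rw [if_pos h]
      have hne : i ≠ r := by rintro rfl; exact absurd h (not_lt.mpr hiv)
      obtain ⟨h1, h2, h3, h4⟩ := ih (r - 1) i (by omega) hiv (by omega)
      refine ⟨h1, by omega, ?_, h4⟩
      intro j hj1 hj2
      rcases eq_or_lt_of_le hj2 with rfl | hj'
      · exact h
      · exact h3 j hj1 (by omega)
    · rw [if_neg h]
      exact ⟨hir, le_refl r, fun j h1 h2 => absurd (lt_of_lt_of_le h1 h2) (lt_irrefl _),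
        not_lt.mp h⟩

lemma hoareLoop_spec (pivot : α) :
    ∀ (fuel : ℕ) (A : Array α) (l r : ℕ),
      r < A.size → l ≤ A.size → r - l < fuel →
      (∀ j, j < l → A[j]! ≤ pivot) →
      (∀ j, r < j → j < A.size → pivot ≤ A[j]!) →
      (∃ i, i ≤ r ∧ A[i]! ≤ pivot) →
      (hoareLoop pivot fuel A l r).1.toList.Perm A.toList ∧
      (hoareLoop pivot fuel A l r).2 ≤ A.size ∧
      (∀ j, j < (hoareLoop pivot fuel A l r).2 → (hoareLoop pivot fuel A l r).1[j]! ≤ pivot) ∧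
      (∀ j, (hoareLoop pivot fuel A l r).2 ≤ j → j < A.size →
        pivot ≤ (hoareLoop pivot fuel A l r).1[j]!) := by
  intro fuel
  induction fuel with
  | zero => intro A l r _ _ hf; omega
  | succ fuel ih =>
    intro A l r hr hl hf hinv1 hinv2 hwit
    obtain ⟨i, hir, hiv⟩ := hwit
    obtain ⟨hL1, hL2, hL3, hL4⟩ := hoareFindL_spec A pivot A.size l hl (by omega)
    obtain ⟨hR1, hR2, hR3, hR4⟩ := hoareFindR_spec A pivot A.size r i hir hiv (by omega)
    set l' := hoareFindL A pivot A.size l with hl'def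
    set r' := hoareFindR A pivot A.size r with hr'def
    have hloop : hoareLoop pivot (fuel + 1) A l r =
        if l' < r' then hoareLoop pivot fuel (A.swapIfInBounds l' r') (l' + 1) (r' - 1)
        else (A, l') := by
      rw [hoareLoop]
    by_cases hlr : l' < r'
    · rw [if_pos hlr] at hloop
      have hl's : l' < A.size := lt_of_lt_of_le hlr (le_trans hR2 (le_of_lt hr))
      have hr's : r' < A.size := lt_of_le_of_lt hR2 hr
      have hswap : A.swapIfInBounds l' r' = A.swap l' r' hl's hr's := by
        simp [Array.swapIfInBounds_def, hl's, hr's]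
      have hBsize : (A.swapIfInBounds l' r').size = A.size := by rw [hswap]; exact Array.size_swap ..
      have hBget : ∀ (k : ℕ), k < A.size →
          (A.swapIfInBounds l' r')[k]! = if k = l' then A[r']! else if k = r' then A[l']! else A[k]! := by
        intro k hk
        have hkB : k < (A.swap l' r' hl's hr's).size := by
          rw [Array.size_swap]; exact hk
        rw [hswap, getElem!_pos (A.swap l' r' hl's hr's) k hkB, Array.getElem_swap, getElem!_pos A r' hr's,
          getElem!_pos A l' hl's, getElem!_pos A k hk]
      have hperm : (A.swapIfInBounds l' r').toList.Perm A.toList := by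
        rw [hswap]; exact mySwap_perm A ⟨l', hl's⟩ ⟨r', hr's⟩
      have hBl' : (A.swapIfInBounds l' r')[l']! = A[r']! := by rw [hBget l' hl's]; simp
      have hBr' : (A.swapIfInBounds l' r')[r']! = A[l']! := by
        rw [hBget r' hr's]; simp [Ne.symm (ne_of_lt hlr)]
      obtain ⟨ih1, ih2, ih3, ih4⟩ := ih (A.swapIfInBounds l' r') (l' + 1) (r' - 1)
        (by omega) (by omega) (by omega)
        (by
          intro j hj
          rcases Nat.lt_succ_iff_lt_or_eq.mp hj with hj' | rfl
          · rw [hBget j (by omega)]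
            rw [if_neg (by omega), if_neg (by omega)]
            by_cases hjl : j < l
            · exact hinv1 j hjl
            · exact le_of_lt (hL3 j (by omega) hj')
          · rw [hBl']; exact hR4)
        (by
          intro j hj1 hj2
          rw [hBsize] at hj2
          have hj' : r' ≤ j := by omega
          rcases eq_or_lt_of_le hj' with rfl | hj''
          · rw [hBr']; exact hL4 hl's
          · rw [hBget j hj2, if_neg (by omega), if_neg (by omega)]
            by_cases hjr : j ≤ r
            · exact le_of_lt (hR3 j hj'' hjr)
            · exact hinv2 j (by omega) hj2)
        (⟨l', by omega, by rw [hBl']; exact hR4⟩)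
      rw [hloop]
      exact ⟨ih1.trans hperm, by omega, ih3, fun j hj1 hj2 => ih4 j hj1 (by omega)⟩
    · rw [if_neg hlr] at hloop
      rw [hloop]
      refine ⟨List.Perm.refl _, hL2, ?_, ?_⟩
      · intro j hj
        by_cases hjl : j < l
        · exact hinv1 j hjl
        · exact le_of_lt (hL3 j (by omega) hj)
      · intro j hj1 hj2
        by_cases hjr : r < j
        · exact hinv2 j hjr hj2
        · by_cases hjr' : r' < j
          · exact le_of_lt (hR3 j hjr' (by omega))
          · have : j = l' := by omega
            subst this
            exact hL4 hj2


/-- Correctness of Hoare's partitioning on an array containing the pivot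
value: the returned index `p` is such that every element at a position `< p`
is `≤ pivot`, every element at a position `≥ p` is `≥ pivot`, and the
resulting array is a permutation of the input. -/
theorem hoarePartition_correct (A : Array α) (pivot : α)
    (hmem : pivot ∈ A.toList) :
    ((hoarePartition A pivot).1).toList.Perm A.toList ∧
    (hoarePartition A pivot).2 ≤ A.size ∧
    (∀ j, j < (hoarePartition A pivot).2 →
        (hoarePartition A pivot).1[j]! ≤ pivot) ∧
    (∀ j, (hoarePartition A pivot).2 ≤ j → j < A.size →
        pivot ≤ (hoarePartition A pivot).1[j]!) := by
  have hsize : 0 < A.size := by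
    rcases List.mem_iff_getElem.mp hmem with ⟨i, hi, _⟩
    simpa using lt_of_le_of_lt (Nat.zero_le i) hi
  obtain ⟨i, hi, hiv⟩ := List.mem_iff_getElem.mp hmem
  have hi' : i < A.size := by simpa using hi
  have hwit : A[i]! ≤ pivot := by
    rw [getElem!_pos A i hi']
    rw [← Array.getElem_toList hi'] at *
    exact le_of_eq hiv
  exact hoareLoop_spec pivot A.size A 0 (A.size - 1)
    (by omega) (by omega) (by omega)
    (fun j hj => absurd hj (by omega))
    (fun j hj1 hj2 => absurd hj1 (by omega))
    ⟨i, by omega, hwit⟩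
end
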